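/- Let f : ℝᵈ → ℝ be differentiable with L-Lipschitz gradient, h : ℝᵈ → ℝ convex, Φ = f + h, η > 0, and v ∈ ℝᵈ. Let x⁺ = prox_{ηh}(x - ηv) and x̄ = prox_{ηh}(x - η∇f(x)). Then Φ(x⁺) ≤ Φ(x) - (5/(8η) - L/2)‖x⁺ - x‖² - (1/(3η) - L)‖x̄ - x‖² + η‖∇f(x) - v‖². -/

import Mathlib

open scoped RealInnerProductSpace

/-- Descent lemma: for a function with L-Lipschitz gradient,
`f (x + u) ≤ f x + ⟪f' x, u⟫ + L/2 ‖u‖²`. -/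
lemma descent_lemma_aux {d : ℕ}
    (f : EuclideanSpace ℝ (Fin d) → ℝ)
    (f' : EuclideanSpace ℝ (Fin d) → EuclideanSpace ℝ (Fin d)) (L : ℝ)
    (hdiff : ∀ x, HasGradientAt f (f' x) x)
    (hLip : ∀ x y, ‖f' x - f' y‖ ≤ L * ‖x - y‖)
    (x u : EuclideanSpace ℝ (Fin d)) :
    f (x + u) ≤ f x + ⟪f' x, u⟫ + L / 2 * ‖u‖ ^ 2 := by
  set φ : ℝ → ℝ := fun t =>
    f x + t * ⟪f' x, u⟫ + L * ‖u‖ ^ 2 / 2 * t ^ 2 - f (x + t • u) with hφ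
  have hd : ∀ t : ℝ,
      HasDerivAt φ (⟪f' x, u⟫ + L * ‖u‖ ^ 2 / 2 * (2 * t) - ⟪f' (x + t • u), u⟫) t := by
    intro t
    have h1 : HasDerivAt (fun t : ℝ => x + t • u) u t := by
      simpa using ((hasDerivAt_id t).smul_const u).const_add x
    have h2 : HasDerivAt (fun t : ℝ => f (x + t • u)) ⟪f' (x + t • u), u⟫ t := by
      have := (hdiff (x + t • u)).hasFDerivAt.comp_hasDerivAt t h1
      simp at this
      exact this
    have ha : HasDerivAt (fun t : ℝ => f x + t * ⟪f' x, u⟫) ⟪f' x, u⟫ t := by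
      simpa using ((hasDerivAt_id t).mul_const ⟪f' x, u⟫).const_add (f x)
    have hb : HasDerivAt (fun s : ℝ => L * ‖u‖ ^ 2 / 2 * s ^ 2)
        (L * ‖u‖ ^ 2 / 2 * (2 * t)) t := by
      have hq := (hasDerivAt_pow 2 t).const_mul (L * ‖u‖ ^ 2 / 2)
      norm_num at hq
      convert hq using 1
    exact (ha.add hb).sub h2
  have hmono : MonotoneOn φ (Set.Icc (0:ℝ) 1) := by
    apply monotoneOn_of_deriv_nonneg (convex_Icc 0 1)
    · exact fun t _ => (hd t).differentiableAt.continuousAt.continuousWithinAt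
    · exact fun t _ => (hd t).differentiableAt.differentiableWithinAt
    · intro t ht
      rw [interior_Icc] at ht
      rw [(hd t).deriv]
      have hcs : ⟪f' (x + t • u) - f' x, u⟫ ≤ ‖f' (x + t • u) - f' x‖ * ‖u‖ :=
        real_inner_le_norm _ _
      have hl : ‖f' (x + t • u) - f' x‖ ≤ L * (t * ‖u‖) := by
        have := hLip (x + t • u) x
        simpa [norm_smul, abs_of_pos ht.1, mul_assoc] using this
      have hsplit : ⟪f' (x + t • u), u⟫ - ⟪f' x, u⟫ = ⟪f' (x + t • u) - f' x, u⟫ := by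
        rw [inner_sub_left]
      nlinarith [norm_nonneg u, hcs, hl, hsplit]
  have h01 : φ 0 ≤ φ 1 := hmono (by norm_num) (by norm_num) (by norm_num)
  have e0 : φ 0 = 0 := by
    simp only [hφ, zero_smul, add_zero, zero_mul, sub_self, mul_zero, ne_eq,
      OfNat.ofNat_ne_zero, not_false_eq_true, zero_pow]
  have e1 : φ 1 = f x + ⟪f' x, u⟫ + L * ‖u‖ ^ 2 / 2 - f (x + u) := by
    simp only [hφ, one_smul, one_pow, one_mul, mul_one]
  rw [e0, e1] at h01
  linarith

/-- Variational inequality for an (exact) minimizer of the prox subproblem. -/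
lemma prox_vi_aux {d : ℕ}
    (h : EuclideanSpace ℝ (Fin d) → ℝ) (hconv : ConvexOn ℝ Set.univ h)
    (η : ℝ) (hη : 0 < η) (z w : EuclideanSpace ℝ (Fin d))
    (hmin : ∀ y : EuclideanSpace ℝ (Fin d),
      h w + (1 / (2 * η)) * ‖w - z‖ ^ 2 ≤ h y + (1 / (2 * η)) * ‖y - z‖ ^ 2)
    (y : EuclideanSpace ℝ (Fin d)) :
    η * (h w - h y) ≤ ⟪w - z, y - w⟫ := by
  have key : ∀ θ : ℝ, 0 < θ → θ ≤ 1 →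
      η * (h w - h y) ≤ ⟪w - z, y - w⟫ + θ / 2 * ‖y - w‖ ^ 2 := by
    intro θ hθ hθ1
    have hp : w + θ • (y - w) = (1 - θ) • w + θ • y := by module
    have hmp := hmin (w + θ • (y - w))
    have hcv : h ((1 - θ) • w + θ • y) ≤ (1 - θ) * h w + θ * h y :=
      hconv.2 (Set.mem_univ w) (Set.mem_univ y) (by linarith) hθ.le (by ring)
    rw [hp] at hmp
    have hnorm : ‖(1 - θ) • w + θ • y - z‖ ^ 2
        = ‖w - z‖ ^ 2 + 2 * (θ * ⟪w - z, y - w⟫) + θ ^ 2 * ‖y - w‖ ^ 2 := by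
      have hrw : (1 - θ) • w + θ • y - z = (w - z) + θ • (y - w) := by module
      rw [hrw, norm_add_sq_real, real_inner_smul_right, norm_smul]
      rw [Real.norm_eq_abs, abs_of_pos hθ]
      ring
    rw [hnorm] at hmp
    have hstep : θ * (h w - h y)
        ≤ (1 / (2 * η)) * (2 * (θ * ⟪w - z, y - w⟫) + θ ^ 2 * ‖y - w‖ ^ 2) := by
      nlinarith [hmp, hcv]
    have h2η : (0:ℝ) < 2 * η := by linarith
    have hmul := mul_le_mul_of_nonneg_left hstep h2η.le
    have hsimp : 2 * η * ((1 / (2 * η)) * (2 * (θ * ⟪w - z, y - w⟫)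
        + θ ^ 2 * ‖y - w‖ ^ 2))
        = 2 * (θ * ⟪w - z, y - w⟫) + θ ^ 2 * ‖y - w‖ ^ 2 := by
      field_simp
    rw [hsimp] at hmul
    have h2θ : (0:ℝ) < 2 * θ := by linarith
    rw [← mul_le_mul_iff_right₀ h2θ]
    nlinarith [hmul]
  by_contra hcon
  push_neg at hcon
  set D := η * (h w - h y) - ⟪w - z, y - w⟫ with hD
  have hDpos : 0 < D := by simp only [hD]; linarith
  set N := ‖y - w‖ ^ 2 with hN
  have hNnn : 0 ≤ N := by positivity
  have hθdef : 0 < min 1 (D / (N + 1)) := by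
    apply lt_min one_pos
    positivity
  have hk := key (min 1 (D / (N + 1))) hθdef (min_le_left _ _)
  have hle : min 1 (D / (N + 1)) ≤ D / (N + 1) := min_le_right _ _
  have h1 : D ≤ min 1 (D / (N + 1)) / 2 * N := by simp only [hD] at *; linarith
  have h2 : min 1 (D / (N + 1)) / 2 * N ≤ (D / (N + 1)) / 2 * N := by
    apply mul_le_mul_of_nonneg_right _ hNnn
    linarith
  have h3 : (D / (N + 1)) / 2 * N < D := by
    rw [div_div, div_mul_eq_mul_div, div_lt_iff₀ (by positivity)]
    nlinarith
  linarith

/-- Scalar Young-type inequality. -/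
lemma young_aux (p q r : ℝ) (hp : 0 ≤ p) (hq : 0 ≤ q) (hr : 0 ≤ r)
    (hle : p ≤ q + r) : p ^ 2 ≤ 4 / 3 * q ^ 2 + 4 * r ^ 2 := by
  nlinarith [sq_nonneg (q - 3 * r), mul_self_le_mul_self hp hle]

/-- Scalar bound for the gradient error term. -/
lemma tbound_aux (t W n η : ℝ) (hη : 0 < η) (hW : 0 ≤ W) (hn : 0 ≤ n)
    (h1 : n ^ 2 ≤ η * t) (h2 : t ≤ W * n) : t ≤ η * W ^ 2 := by
  rcases le_or_gt t 0 with h0 | h0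
  · nlinarith
  · nlinarith [mul_le_mul h2 h2 h0.le (by positivity : (0:ℝ) ≤ W * n),
      mul_le_mul_of_nonneg_left h1 (mul_nonneg hW hW)]

/-- Purely scalar assembly of the descent inequality. -/
lemma arith_aux (η L fxp hxp fx hx hxb A B C P Gc Gb Vb W : ℝ)
    (hη : 0 < η)
    (U : fxp ≤ fx + Gc + Gb + L / 2 * A)
    (H1 : η * (hxp - hxb) ≤ -P - η * Vb)
    (H2 : η * (hxb - hx) ≤ -C - η * Gc)
    (e7 : Gb - Vb ≤ η * W ^ 2)
    (e2p : 2 * P = A + B - C)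
    (e8 : A ≤ 4 / 3 * C + 4 * B)
    (hLC : 0 ≤ L * C) :
    fxp + hxp ≤ fx + hx - (5 / (8 * η) - L / 2) * A - (1 / (3 * η) - L) * C
      + η * W ^ 2 := by
  rw [← mul_le_mul_iff_right₀ hη]
  have expand : η * (fx + hx - (5 / (8 * η) - L / 2) * A - (1 / (3 * η) - L) * C
      + η * W ^ 2)
      = η * fx + η * hx - 5 / 8 * A + η * (L / 2 * A) - 1 / 3 * C + η * (L * C)
        + η * (η * W ^ 2) := by
    field_simp
    ring
  rw [mul_add, expand]
  have Uη := mul_le_mul_of_nonneg_left U hη.le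
  have e7η := mul_le_mul_of_nonneg_left e7 hη.le
  have hLCη := mul_le_mul_of_nonneg_left hLC hη.le
  nlinarith [Uη, e7η, hLCη, H1, H2, e2p, e8]

theorem inexact_prox_descent {d : ℕ}
    (f h : EuclideanSpace ℝ (Fin d) → ℝ)
    (f' : EuclideanSpace ℝ (Fin d) → EuclideanSpace ℝ (Fin d)) (L : ℝ)
    (hdiff : ∀ x, HasGradientAt f (f' x) x)
    (hLip : ∀ x y, ‖f' x - f' y‖ ≤ L * ‖x - y‖)
    (hconv : ConvexOn ℝ Set.univ h)
    (η : ℝ) (hη : 0 < η) (x v xplus xbar : EuclideanSpace ℝ (Fin d))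
    (hminv : ∀ y : EuclideanSpace ℝ (Fin d),
      h xplus + (1 / (2 * η)) * ‖xplus - (x - η • v)‖ ^ 2 ≤
        h y + (1 / (2 * η)) * ‖y - (x - η • v)‖ ^ 2)
    (hminw : ∀ y : EuclideanSpace ℝ (Fin d),
      h xbar + (1 / (2 * η)) * ‖xbar - (x - η • f' x)‖ ^ 2 ≤
        h y + (1 / (2 * η)) * ‖y - (x - η • f' x)‖ ^ 2) :
    f xplus + h xplus ≤ f x + h x
      - (5 / (8 * η) - L / 2) * ‖xplus - x‖ ^ 2
      - (1 / (3 * η) - L) * ‖xbar - x‖ ^ 2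
      + η * ‖f' x - v‖ ^ 2 := by
  have hxa : x + (xplus - x) = xplus := by abel
  have hacb : xplus - x = (xbar - x) + (xplus - xbar) := by abel
  have hcb : xbar - x = (xplus - x) - (xplus - xbar) := by abel
  -- descent lemma
  have U : f xplus ≤ f x + ⟪f' x, xbar - x⟫ + ⟪f' x, xplus - xbar⟫
      + L / 2 * ‖xplus - x‖ ^ 2 := by
    have hU := descent_lemma_aux f f' L hdiff hLip x (xplus - x)
    rw [hxa] at hU
    have : ⟪f' x, xplus - x⟫ = ⟪f' x, xbar - x⟫ + ⟪f' x, xplus - xbar⟫ := by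
      rw [hacb, inner_add_right]
    linarith
  -- variational inequalities
  have H1 : η * (h xplus - h xbar)
      ≤ -⟪xplus - x, xplus - xbar⟫ - η * ⟪v, xplus - xbar⟫ := by
    have hvi := prox_vi_aux h hconv η hη (x - η • v) xplus hminv xbar
    have e1 : xplus - (x - η • v) = (xplus - x) + η • v := by module
    have e2 : xbar - xplus = -(xplus - xbar) := by abel
    rw [e1, e2, inner_neg_right, inner_add_left, real_inner_smul_left] at hvi
    linarith
  have H2 : η * (h xbar - h x)
      ≤ -‖xbar - x‖ ^ 2 - η * ⟪f' x, xbar - x⟫ := by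
    have hvi := prox_vi_aux h hconv η hη (x - η • f' x) xbar hminw x
    have e1 : xbar - (x - η • f' x) = (xbar - x) + η • f' x := by module
    have e2 : x - xbar = -(xbar - x) := by abel
    rw [e1, e2, inner_neg_right, inner_add_left, real_inner_smul_left,
      real_inner_self_eq_norm_sq] at hvi
    linarith
  have H3 : η * (h xbar - h xplus)
      ≤ ⟪xbar - x, xplus - xbar⟫ + η * ⟪f' x, xplus - xbar⟫ := by
    have hvi := prox_vi_aux h hconv η hη (x - η • f' x) xbar hminw xplus
    have e1 : xbar - (x - η • f' x) = (xbar - x) + η • f' x := by module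
    rw [e1, inner_add_left, real_inner_smul_left] at hvi
    linarith
  have ecb : ⟪xbar - x, xplus - xbar⟫
      = ⟪xplus - x, xplus - xbar⟫ - ‖xplus - xbar‖ ^ 2 := by
    rw [hcb, inner_sub_left, real_inner_self_eq_norm_sq]
  -- nonexpansiveness
  have e5 : ‖xplus - xbar‖ ^ 2
      ≤ η * (⟪f' x, xplus - xbar⟫ - ⟪v, xplus - xbar⟫) := by
    linarith [H1, H3, ecb]
  -- Cauchy-Schwarz
  have eCS : ⟪f' x, xplus - xbar⟫ - ⟪v, xplus - xbar⟫
      ≤ ‖f' x - v‖ * ‖xplus - xbar‖ := by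
    have hcs := real_inner_le_norm (f' x - v) (xplus - xbar)
    rw [inner_sub_left] at hcs
    linarith
  -- gradient-error bound
  have e7 : ⟪f' x, xplus - xbar⟫ - ⟪v, xplus - xbar⟫ ≤ η * ‖f' x - v‖ ^ 2 :=
    tbound_aux _ _ _ _ hη (norm_nonneg _) (norm_nonneg _) e5 eCS
  -- polarization
  have e2p : 2 * ⟪xplus - x, xplus - xbar⟫
      = ‖xplus - x‖ ^ 2 + ‖xplus - xbar‖ ^ 2 - ‖xbar - x‖ ^ 2 := by
    have hns : ‖(xplus - x) - (xplus - xbar)‖ ^ 2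
        = ‖xplus - x‖ ^ 2 - 2 * ⟪xplus - x, xplus - xbar⟫ + ‖xplus - xbar‖ ^ 2 := by
      rw [norm_sub_sq_real]
    rw [hcb, hns]
    ring
  -- Young-type inequality
  have e8 : ‖xplus - x‖ ^ 2 ≤ 4 / 3 * ‖xbar - x‖ ^ 2 + 4 * ‖xplus - xbar‖ ^ 2 := by
    have hnab : ‖xplus - x‖ ≤ ‖xbar - x‖ + ‖xplus - xbar‖ := by
      rw [hacb]; exact norm_add_le _ _
    exact young_aux _ _ _ (norm_nonneg _) (norm_nonneg _) (norm_nonneg _) hnab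
  -- L * C ≥ 0
  have hLC : 0 ≤ L * ‖xbar - x‖ ^ 2 := by
    rcases eq_or_ne xbar x with hxe | hxe
    · simp [hxe]
    · have hpos : 0 < ‖xbar - x‖ := norm_pos_iff.mpr (sub_ne_zero.mpr hxe)
      have hL : 0 ≤ L := by
        have h1 := hLip xbar x
        have h2 : (0:ℝ) ≤ ‖f' xbar - f' x‖ := norm_nonneg _
        nlinarith
      positivity
  exact arith_aux η L (f xplus) (h xplus) (f x) (h x) (h xbar)
    (‖xplus - x‖ ^ 2) (‖xplus - xbar‖ ^ 2) (‖xbar - x‖ ^ 2)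
    (⟪xplus - x, xplus - xbar⟫) (⟪f' x, xbar - x⟫) (⟪f' x, xplus - xbar⟫)
    (⟪v, xplus - xbar⟫) (‖f' x - v‖) hη U H1 H2 e7 e2p e8 hLC
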